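/- For every stochastic matrix p on a nonempty finite set S, Doeblin's ergodicity coefficient satisfies α(p) = sup{ α ∈ [0,1] : there exist E ∈ ℰ and M ∈ 𝒫 with p = α·E + (1−α)·M }. -/

import Mathlib

/-- A stochastic matrix on a finite set `S`: nonnegative entries, each row sums to 1. -/
def IsStochastic {S : Type*} [Fintype S] (p : Matrix S S ℝ) : Prop :=
  (∀ i j, 0 ≤ p i j) ∧ ∀ i, ∑ j, p i j = 1

/-- A matrix all of whose rows are identical. -/
def IsConstRow {S : Type*} (E : Matrix S S ℝ) : Prop :=
  ∀ i i' j, E i j = E i' j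

/-- Doeblin's ergodicity coefficient `α(p) = Σ_j min_i p(i,j)`. -/
noncomputable def doeblin {S : Type*} [Fintype S] [Nonempty S] (p : Matrix S S ℝ) : ℝ :=
  ∑ j, Finset.univ.inf' Finset.univ_nonempty fun i => p i j

theorem doeblin_eq_sSup {S : Type*} [Fintype S] [Nonempty S]
    (p : Matrix S S ℝ) (hp : IsStochastic p) :
    doeblin p = sSup {α : ℝ | α ∈ Set.Icc (0 : ℝ) 1 ∧
      ∃ E M : Matrix S S ℝ, IsStochastic E ∧ IsConstRow E ∧ IsStochastic M ∧
        p = α • E + (1 - α) • M} := by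
  classical
  set m : S → ℝ := fun j => Finset.univ.inf' Finset.univ_nonempty fun i => p i j with hm
  have hm_le : ∀ i j, m j ≤ p i j := fun i j => Finset.inf'_le _ (Finset.mem_univ i)
  have hm_nonneg : ∀ j, 0 ≤ m j := fun j => Finset.le_inf' _ _ fun i _ => hp.1 i j
  have hd : doeblin p = ∑ j, m j := rfl
  obtain ⟨i₀⟩ := ‹Nonempty S›
  have h0 : 0 ≤ doeblin p := by
    rw [hd]; exact Finset.sum_nonneg fun j _ => hm_nonneg j
  have h1 : doeblin p ≤ 1 := by
    rw [hd, ← hp.2 i₀]; exact Finset.sum_le_sum fun j _ => hm_le i₀ j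
  have hcard : (0 : ℝ) < (Fintype.card S : ℝ) := by
    exact_mod_cast Fintype.card_pos
  set U : Matrix S S ℝ := fun _ _ => (Fintype.card S : ℝ)⁻¹ with hUdef
  have hU : IsStochastic U := by
    constructor
    · intro i j; positivity
    · intro i
      simp [hUdef, Finset.sum_const, Finset.card_univ]
  have hUc : IsConstRow U := fun _ _ _ => rfl
  set α := doeblin p with hαdef
  have hmem : α ∈ {α : ℝ | α ∈ Set.Icc (0 : ℝ) 1 ∧
      ∃ E M : Matrix S S ℝ, IsStochastic E ∧ IsConstRow E ∧ IsStochastic M ∧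
        p = α • E + (1 - α) • M} := by
    refine ⟨⟨h0, h1⟩, ?_⟩
    by_cases hα1 : α = 1
    · have hpc : ∀ i j, p i j = m j := by
        intro i j
        have hsum : ∑ j, (p i j - m j) = 0 := by
          rw [Finset.sum_sub_distrib, hp.2 i, ← hd, hα1, sub_self]
        have := (Finset.sum_eq_zero_iff_of_nonneg
          (fun j _ => sub_nonneg.2 (hm_le i j))).1 hsum j (Finset.mem_univ j)
        linarith
      refine ⟨p, U, hp, ?_, hU, ?_⟩
      · intro i i' j; rw [hpc i j, hpc i' j]
      · rw [hα1]; simp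
    · by_cases hα0 : α = 0
      · refine ⟨U, p, hU, hUc, hp, ?_⟩
        rw [hα0]; simp
      · have hαpos : 0 < α := lt_of_le_of_ne h0 (Ne.symm hα0)
        have h1pos : 0 < 1 - α := lt_of_le_of_ne (by linarith) (fun h => hα1 (by linarith))
        refine ⟨fun _ j => m j / α, fun i j => (p i j - m j) / (1 - α),
          ⟨fun i j => div_nonneg (hm_nonneg j) h0, fun i => ?_⟩,
          fun _ _ _ => rfl,
          ⟨fun i j => div_nonneg (sub_nonneg.2 (hm_le i j)) h1pos.le, fun i => ?_⟩, ?_⟩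
        · rw [← Finset.sum_div, ← hd, div_self hα0]
        · rw [← Finset.sum_div, Finset.sum_sub_distrib, hp.2 i, ← hd,
            div_self (ne_of_gt h1pos)]
        · funext i j
          show p i j = α * (m j / α) + (1 - α) * ((p i j - m j) / (1 - α))
          field_simp
          ring
  refine le_antisymm (le_csSup ?_ hmem) (csSup_le ⟨α, hmem⟩ ?_)
  · refine ⟨doeblin p, fun x hx => ?_⟩
    obtain ⟨⟨hx0, hx1⟩, E, M, hE, hEc, hM, hpe⟩ := hx
    have key : ∀ j, x * E i₀ j ≤ m j := by
      intro j
      refine Finset.le_inf' _ _ fun i _ => ?_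
      have : p i j = x * E i j + (1 - x) * M i j := by
        rw [hpe]; simp [Matrix.add_apply]
      rw [this, hEc i i₀ j]
      nlinarith [hM.1 i j, hE.1 i₀ j]
    calc x = x * ∑ j, E i₀ j := by rw [hE.2 i₀, mul_one]
      _ = ∑ j, x * E i₀ j := Finset.mul_sum _ _ _
      _ ≤ ∑ j, m j := Finset.sum_le_sum fun j _ => key j
      _ = doeblin p := hd.symm
  · rintro x ⟨⟨hx0, hx1⟩, E, M, hE, hEc, hM, hpe⟩
    have key : ∀ j, x * E i₀ j ≤ m j := by
      intro j
      refine Finset.le_inf' _ _ fun i _ => ?_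
      have : p i j = x * E i j + (1 - x) * M i j := by
        rw [hpe]; simp [Matrix.add_apply]
      rw [this, hEc i i₀ j]
      nlinarith [hM.1 i j, hE.1 i₀ j]
    calc x = x * ∑ j, E i₀ j := by rw [hE.2 i₀, mul_one]
      _ = ∑ j, x * E i₀ j := Finset.mul_sum _ _ _
      _ ≤ ∑ j, m j := Finset.sum_le_sum fun j _ => key j
      _ = doeblin p := hd.symm
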